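/- arXiv:2408.13083 — 2 statements merged into one kernel-verified Lean document; each statement's English description precedes it below -/
import Mathlib

section
/- Let ν > 0 be a real number, k ∈ ℕ, and 0 ≤ j ≤ k. Then ∑_{i=0}^{k−j} C(k,i)² · (i!/(ν)_i) · C(k−i, j) = C(k,j) · (ν+k−j)_k/(ν)_k, where C(·,·) denotes binomial coefficients. -/
open Finset

/-- The Pochhammer symbol `(a)_n = a(a+1)⋯(a+n-1)` for a real number `a`. -/
noncomputable def poch (a : ℝ) (n : ℕ) : ℝ := ∏ i ∈ Finset.range n, (a + i)

lemma poch_zero (a : ℝ) : poch a 0 = 1 := by simp [poch]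

lemma poch_succ (a : ℝ) (n : ℕ) : poch a (n + 1) = poch a n * (a + n) := by
  simp [poch, Finset.prod_range_succ]

lemma poch_succ' (a : ℝ) (n : ℕ) : poch a (n + 1) = a * poch (a + 1) n := by
  rw [poch, poch, Finset.prod_range_succ']
  have h : ∀ i ∈ Finset.range n, (a + ((i+1:ℕ):ℝ)) = (a + 1) + (i:ℝ) := by
    intro i _; push_cast; ring
  rw [Finset.prod_congr rfl h]
  push_cast
  ring

lemma poch_add (a : ℝ) (m n : ℕ) : poch a (m + n) = poch a m * poch (a + m) n := by
  induction n with
  | zero => simp [poch_zero]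
  | succ n ih =>
      rw [← Nat.add_assoc, poch_succ, ih, poch_succ]
      push_cast
      ring

lemma poch_pos {a : ℝ} (ha : 0 < a) (n : ℕ) : 0 < poch a n := by
  apply Finset.prod_pos
  intro i _
  positivity

/-- Key identity: `∑_{i=0}^m C(k,i) C(m,i) i! (ν+i)_{k-i} = (ν+m)_k` for `m ≤ k`. -/
lemma star : ∀ k m : ℕ, m ≤ k → ∀ ν : ℝ,
    ∑ i ∈ Finset.range (m + 1),
      (k.choose i : ℝ) * (m.choose i : ℝ) * (Nat.factorial i : ℝ) * poch (ν + i) (k - i) =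
    poch (ν + m) k := by
  intro k
  induction k with
  | zero =>
      intro m hm ν
      interval_cases m
      simp [poch]
  | succ k ih =>
      intro m
      induction m with
      | zero =>
          intro _ ν
          simp [poch]
      | succ m ihm =>
          intro hm ν
          have hmk : m ≤ k := Nat.lt_succ_iff.mp hm
          have hmk1 : m ≤ k + 1 := hmk.trans (Nat.le_succ k)
          rw [Finset.sum_range_succ']
          have h0 : ((k+1).choose 0 : ℝ) * ((m+1).choose 0 : ℝ) * (Nat.factorial 0 : ℝ)
              * poch (ν + ((0:ℕ):ℝ)) (k + 1 - 0) = poch ν (k+1) := by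
            simp
          rw [h0]
          have hsplit : ∀ i ∈ Finset.range (m + 1),
              ((k+1).choose (i+1) : ℝ) * ((m+1).choose (i+1) : ℝ) * (Nat.factorial (i+1) : ℝ)
                * poch (ν + ((i+1:ℕ):ℝ)) (k + 1 - (i+1))
              = ((k:ℝ)+1) * ((k.choose i : ℝ) * (m.choose i : ℝ) * (Nat.factorial i : ℝ)
                  * poch ((ν+1) + (i:ℝ)) (k - i))
                + ((k+1).choose (i+1) : ℝ) * (m.choose (i+1) : ℝ) * (Nat.factorial (i+1) : ℝ)
                  * poch (ν + ((i+1:ℕ):ℝ)) (k - i) := by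
            intro i _
            have hc : ((m+1).choose (i+1) : ℝ) = (m.choose i : ℝ) + (m.choose (i+1) : ℝ) := by
              rw [Nat.choose_succ_succ]; push_cast; ring
            have hfac : ((k+1).choose (i+1) : ℝ) * (Nat.factorial (i+1) : ℝ)
                = ((k:ℝ)+1) * ((k.choose i : ℝ) * (Nat.factorial i : ℝ)) := by
              have h2 : (k+1).choose (i+1) * Nat.factorial (i+1)
                  = (k+1) * (k.choose i * Nat.factorial i) := by
                rw [Nat.factorial_succ, ← Nat.mul_assoc, ← Nat.add_one_mul_choose_eq]
                ring
              exact_mod_cast congrArg (Nat.cast (R := ℝ)) h2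
            have hsub : k + 1 - (i + 1) = k - i := by omega
            have hν : (ν+1) + (i:ℝ) = ν + ((i+1:ℕ):ℝ) := by push_cast; ring
            rw [hsub, hc, hν]
            calc ((k+1).choose (i+1) : ℝ) * ((m.choose i : ℝ) + (m.choose (i+1) : ℝ))
                  * (Nat.factorial (i+1) : ℝ) * poch (ν + ((i+1:ℕ):ℝ)) (k - i)
                = (((k+1).choose (i+1) : ℝ) * (Nat.factorial (i+1) : ℝ)) * (m.choose i : ℝ)
                    * poch (ν + ((i+1:ℕ):ℝ)) (k - i)
                  + ((k+1).choose (i+1) : ℝ) * (m.choose (i+1) : ℝ) * (Nat.factorial (i+1) : ℝ)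
                    * poch (ν + ((i+1:ℕ):ℝ)) (k - i) := by ring
              _ = _ := by rw [hfac]; ring
          rw [Finset.sum_congr rfl hsplit, Finset.sum_add_distrib, ← Finset.mul_sum,
            ih m hmk (ν + 1)]
          have hB : poch ν (k+1) + ∑ i ∈ Finset.range (m + 1),
              ((k+1).choose (i+1) : ℝ) * (m.choose (i+1) : ℝ) * (Nat.factorial (i+1) : ℝ)
                * poch (ν + ((i+1:ℕ):ℝ)) (k - i)
              = poch (ν + (m:ℝ)) (k+1) := by
            rw [← ihm hmk1 ν]
            conv_rhs => rw [Finset.sum_range_succ']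
            have h0' : ((k+1).choose 0 : ℝ) * ((m).choose 0 : ℝ) * (Nat.factorial 0 : ℝ)
                * poch (ν + ((0:ℕ):ℝ)) (k + 1 - 0) = poch ν (k+1) := by simp
            rw [h0']
            have hcg : ∀ i ∈ Finset.range m,
                ((k+1).choose (i+1) : ℝ) * ((m).choose (i+1) : ℝ) * (Nat.factorial (i+1) : ℝ)
                  * poch (ν + ((i+1:ℕ):ℝ)) (k + 1 - (i+1))
                = ((k+1).choose (i+1) : ℝ) * (m.choose (i+1) : ℝ) * (Nat.factorial (i+1) : ℝ)
                  * poch (ν + ((i+1:ℕ):ℝ)) (k - i) := by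
              intro i _
              have hsub : k + 1 - (i + 1) = k - i := by omega
              rw [hsub]
            rw [Finset.sum_congr rfl hcg]
            conv_lhs => rw [Finset.sum_range_succ]
            have hlast : ((k+1).choose (m+1) : ℝ) * ((m).choose (m+1) : ℝ)
                * (Nat.factorial (m+1) : ℝ) * poch (ν + ((m+1:ℕ):ℝ)) (k - m) = 0 := by
              simp [Nat.choose_succ_self]
            rw [hlast]
            ring
          have key : poch (ν + (m:ℝ)) (k+1) + ((k:ℝ)+1) * poch (ν + 1 + (m:ℝ)) k
              = poch (ν + ((m+1:ℕ):ℝ)) (k+1) := by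
            have e1 : poch (ν + (m:ℝ)) (k+1) = (ν + m) * poch (ν + (m:ℝ) + 1) k :=
              poch_succ' _ _
            have e2 : poch (ν + ((m+1:ℕ):ℝ)) (k+1)
                = poch (ν + ((m+1:ℕ):ℝ)) k * (ν + ((m+1:ℕ):ℝ) + k) := poch_succ _ _
            have e3 : ν + 1 + (m:ℝ) = ν + ((m+1:ℕ):ℝ) := by push_cast; ring
            have e4 : ν + (m:ℝ) + 1 = ν + ((m+1:ℕ):ℝ) := by push_cast; ring
            rw [e1, e2, e3, e4]
            push_cast
            ring
          linarith [hB, key]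

/-- `∑_{i=0}^{k−j} C(k,i)²·(i!/(ν)_i)·C(k−i,j) = C(k,j)·(ν+k−j)_k/(ν)_k`. -/
theorem coefficient_identity (ν : ℝ) (hν : 0 < ν) (k j : ℕ) (hj : j ≤ k) :
    ∑ i ∈ Finset.range (k - j + 1),
        (k.choose i : ℝ) ^ 2 * ((Nat.factorial i : ℝ) / poch ν i) * ((k - i).choose j : ℝ) =
      (k.choose j : ℝ) * poch (ν + (k : ℝ) - (j : ℝ)) k / poch ν k := by
  set m := k - j with hm
  have hmk : m ≤ k := Nat.sub_le _ _
  have hterm : ∀ i ∈ Finset.range (m + 1),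
      (k.choose i : ℝ) ^ 2 * ((Nat.factorial i : ℝ) / poch ν i) * ((k - i).choose j : ℝ)
      = (k.choose j : ℝ) / poch ν k *
        ((k.choose i : ℝ) * (m.choose i : ℝ) * (Nat.factorial i : ℝ) * poch (ν + i) (k - i)) := by
    intro i hi
    have him : i ≤ m := Nat.lt_succ_iff.mp (Finset.mem_range.mp hi)
    have hik : i ≤ k := him.trans hmk
    have hch : (k.choose i : ℝ) * ((k - i).choose j : ℝ)
        = (k.choose j : ℝ) * (m.choose i : ℝ) := by
      have h1 : k.choose (k - i) * (k - i).choose j = k.choose j * (k - j).choose (k - i - j) :=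
        Nat.choose_mul (by omega)
      have h2 : k.choose (k - i) = k.choose i := Nat.choose_symm hik
      have h3 : k - i - j = m - i := by omega
      have h4 : (k - j).choose (m - i) = m.choose i := Nat.choose_symm him
      rw [h2, h3, h4] at h1
      exact_mod_cast congrArg (Nat.cast (R := ℝ)) h1
    have hpo : poch ν k = poch ν i * poch (ν + i) (k - i) := by
      have h : i + (k - i) = k := by omega
      conv_lhs => rw [← h, poch_add]
    have hp1 : poch ν i ≠ 0 := ne_of_gt (poch_pos hν i)
    have hp2 : poch (ν + i) (k - i) ≠ 0 := by
      have : (0:ℝ) < ν + i := by positivity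
      exact ne_of_gt (poch_pos this _)
    rw [hpo]
    field_simp
    linear_combination (k.choose i : ℝ) * hch
  rw [Finset.sum_congr rfl hterm, ← Finset.mul_sum, star k m hmk ν]
  have e : ν + (k : ℝ) - (j : ℝ) = ν + (m : ℝ) := by
    rw [hm, Nat.cast_sub hj]; ring
  rw [e]
  ring
end

section
/- Let ν ≥ 2 be an integer, k ∈ ℕ, and v ∈ 𝔻. Then (ν−1) · ∫_{𝔻} |v − w|^{2k} (1−|w|²)^ν dι(w) = ∑_{i=0}^{k} C(k,i)² · (i!/(ν)_i) · |v|^{2(k−i)}, where C(k,i) is the binomial coefficient. -/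
open MeasureTheory Complex Filter
open scoped ENNReal NNReal

/-- The open unit disk in `ℂ`. -/
def unitDisk : Set ℂ := {z : ℂ | ‖z‖ < 1}

/-- The `SU(1,1)`-invariant measure `ι` on the unit disk, `dι(z) = dA(z)/(π(1−|z|²)²)`. -/
noncomputable def iota : Measure ℂ :=
  (volume.restrict unitDisk).withDensity
    (fun z => ENNReal.ofReal (1 / (Real.pi * (1 - ‖z‖ ^ 2) ^ 2)))

instance : SigmaFinite iota := SigmaFinite.withDensity_ofReal _

lemma isOpen_unitDisk : IsOpen unitDisk :=
  isOpen_lt (by continuity) continuous_const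

lemma beta_nat_c (m p : ℕ) :
    Complex.betaIntegral (m + 1) (p + 1) =
      ((m.factorial : ℂ) * p.factorial) / ((m + p + 1).factorial) := by
  have h := Complex.Gamma_mul_Gamma_eq_betaIntegral (s := (m:ℂ) + 1) (t := (p:ℂ) + 1)
    (by simp [Complex.add_re]; positivity) (by simp [Complex.add_re]; positivity)
  have h1 : Complex.Gamma ((m:ℂ) + 1) = m.factorial := Complex.Gamma_nat_eq_factorial m
  have h2 : Complex.Gamma ((p:ℂ) + 1) = p.factorial := Complex.Gamma_nat_eq_factorial p
  have h3 : ((m:ℂ) + 1 + ((p:ℂ) + 1)) = ((m + p + 1 : ℕ) : ℂ) + 1 := by push_cast; ring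
  rw [h1, h2, h3, Complex.Gamma_nat_eq_factorial] at h
  have hne : ((m + p + 1).factorial : ℂ) ≠ 0 := by exact_mod_cast (m+p+1).factorial_ne_zero
  field_simp at h ⊢
  rw [h]

lemma beta_nat_r (m p : ℕ) :
    ∫ t in (0:ℝ)..1, t ^ m * (1 - t) ^ p =
      (m.factorial : ℝ) * p.factorial / (m + p + 1).factorial := by
  have h := beta_nat_c m p
  rw [Complex.betaIntegral] at h
  have he : ∀ t : ℝ, ((t:ℂ)) ^ ((m:ℂ) + 1 - 1) * ((1:ℂ) - t) ^ ((p:ℂ) + 1 - 1)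
      = ((t ^ m * (1 - t) ^ p : ℝ) : ℂ) := by
    intro t
    rw [add_sub_cancel_right, add_sub_cancel_right, Complex.cpow_natCast, Complex.cpow_natCast]
    push_cast
    ring
  simp_rw [he] at h
  rw [intervalIntegral.integral_ofReal] at h
  apply Complex.ofReal_injective
  rw [h]
  push_cast
  ring

lemma radial_r (m p : ℕ) :
    ∫ r in (0:ℝ)..1, r ^ (2*m+1) * (1 - r^2) ^ p =
      (m.factorial : ℝ) * p.factorial / (2 * (m + p + 1).factorial) := by
  have hs := intervalIntegral.integral_comp_smul_deriv (a := (0:ℝ)) (b := 1)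
    (f := fun x => x^2) (f' := fun x => 2*x) (g := fun t => t ^ m * (1-t)^p)
    (fun x _ => by simpa using (hasDerivAt_pow 2 x)) (by fun_prop) (by fun_prop)
  simp only [Function.comp] at hs
  have : ∀ x : ℝ, (2*x) • ((x^2) ^ m * (1-x^2)^p) = 2 * (x ^ (2*m+1) * (1 - x^2) ^ p) := by
    intro x; rw [smul_eq_mul, ← pow_mul]; ring
  simp_rw [this] at hs
  rw [intervalIntegral.integral_const_mul] at hs
  norm_num at hs
  rw [beta_nat_r] at hs
  have : ((m+p+1).factorial : ℝ) ≠ 0 := by exact_mod_cast (m+p+1).factorial_ne_zero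
  field_simp at hs ⊢
  linarith

lemma angular (d : ℤ) :
    ∫ θ in Set.Ioo (-Real.pi) Real.pi, Complex.exp (d * θ * Complex.I) =
      if d = 0 then (2 * Real.pi : ℂ) else 0 := by
  have hpi : -Real.pi ≤ Real.pi := by linarith [Real.pi_pos]
  have hIoo : ∫ θ in Set.Ioo (-Real.pi) Real.pi, Complex.exp (d * θ * Complex.I)
      = ∫ θ in (-Real.pi)..Real.pi, Complex.exp (d * θ * Complex.I) := by
    rw [intervalIntegral.integral_of_le hpi, MeasureTheory.integral_Ioc_eq_integral_Ioo]
  rw [hIoo]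
  rcases eq_or_ne d 0 with hd | hd
  · subst hd
    simp [Real.pi_pos.le]
    push_cast
    ring
  · rw [if_neg hd]
    have : ∀ θ : ℝ, (d : ℂ) * θ * Complex.I = (d * Complex.I) * θ := by intro θ; ring
    simp_rw [this]
    rw [integral_exp_mul_complex (by simp [hd, Complex.I_ne_zero])]
    have h1 : (d : ℂ) * Complex.I * (Real.pi : ℂ) = d * (Real.pi * Complex.I) := by ring
    have h2 : (d : ℂ) * Complex.I * ((-Real.pi : ℝ) : ℂ) = d * (-(Real.pi * Complex.I)) := by
      push_cast; ring
    rw [h1, h2]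
    have e1 : Complex.exp ((d:ℂ) * (Real.pi * Complex.I)) = (-1) ^ d := by
      rw [Complex.exp_int_mul, Complex.exp_pi_mul_I]
    have e2 : Complex.exp ((d:ℂ) * (-(Real.pi * Complex.I))) = (-1) ^ d := by
      rw [Complex.exp_int_mul, Complex.exp_neg, Complex.exp_pi_mul_I]
      norm_num
    rw [e1, e2, sub_self, zero_div]

lemma disk_moment (m n p : ℕ) :
    ∫ w in unitDisk, (w ^ m * (starRingEnd ℂ w) ^ n * ((1 - ‖w‖ ^ 2 : ℝ) : ℂ) ^ p) =
      if m = n then (Real.pi : ℂ) * m.factorial * p.factorial / (m + p + 1).factorial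
      else 0 := by
  set F : ℂ → ℂ := fun w => w ^ m * (starRingEnd ℂ w) ^ n * ((1 - ‖w‖ ^ 2 : ℝ) : ℂ) ^ p
    with hF
  set G : ℝ → ℂ := Set.indicator (Set.Ioo (0:ℝ) 1)
    (fun r => (r:ℂ) ^ (m + n + 1) * ((1 - r^2 : ℝ) : ℂ) ^ p) with hG
  set H : ℝ → ℂ := fun θ => Complex.exp ((((m:ℤ) - n : ℤ) : ℂ) * θ * Complex.I) with hH
  have h1 : ∫ w in unitDisk, F w = ∫ w, Set.indicator unitDisk F w := by
    rw [integral_indicator isOpen_unitDisk.measurableSet]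
  rw [h1, ← Complex.integral_comp_polarCoord_symm (Set.indicator unitDisk F)]
  have h2 : Set.EqOn (fun q : ℝ × ℝ => q.1 • Set.indicator unitDisk F (Complex.polarCoord.symm q))
      (fun q : ℝ × ℝ => G q.1 * H q.2) polarCoord.target := by
    rintro ⟨r, θ⟩ hq
    obtain ⟨hr, hθ⟩ : r ∈ Set.Ioi (0:ℝ) ∧ θ ∈ Set.Ioo (-Real.pi) Real.pi := hq
    have hsymm : Complex.polarCoord.symm (r, θ) = (r : ℂ) * Complex.exp (θ * Complex.I) := by
      rw [Complex.polarCoord_symm_apply, Complex.exp_mul_I]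
      push_cast
      ring
    have habs : ‖Complex.polarCoord.symm (r, θ)‖ = r := by
      rw [Complex.norm_polarCoord_symm, abs_of_pos hr]
    have habs' : ‖(r:ℂ) * Complex.exp ((θ:ℂ) * Complex.I)‖ = r := by
      rw [← hsymm]; exact habs
    have hconj : (starRingEnd ℂ) ((r:ℂ) * Complex.exp ((θ:ℂ) * Complex.I))
        = (r : ℂ) * Complex.exp (-((θ:ℂ) * Complex.I)) := by
      rw [map_mul, Complex.conj_ofReal, ← Complex.exp_conj]
      congr 1
      simp [Complex.conj_ofReal]
    by_cases hr1 : r < 1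
    · have hmem : Complex.polarCoord.symm (r, θ) ∈ unitDisk := by
        simp only [unitDisk, Set.mem_setOf_eq, habs]; exact hr1
      simp only [Set.indicator_of_mem hmem, hG,
        Set.indicator_of_mem (Set.mem_Ioo.mpr ⟨hr, hr1⟩), hH, hF]
      show r • _ = _
      rw [hsymm, hconj, habs']
      rw [real_smul, mul_pow, mul_pow, ← Complex.exp_nat_mul, ← Complex.exp_nat_mul]
      have hexp : Complex.exp ((m:ℂ) * ((θ:ℂ) * Complex.I)) *
          Complex.exp ((n:ℂ) * (-((θ:ℂ) * Complex.I)))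
          = Complex.exp ((((m:ℤ) - n : ℤ) : ℂ) * θ * Complex.I) := by
        rw [← Complex.exp_add]; congr 1; push_cast; ring
      rw [← hexp]
      ring
    · have hmem : Complex.polarCoord.symm (r, θ) ∉ unitDisk := by
        simp only [unitDisk, Set.mem_setOf_eq, habs]; exact hr1
      simp only [Set.indicator_of_notMem hmem, hG,
        Set.indicator_of_notMem (fun h : r ∈ Set.Ioo (0:ℝ) 1 => hr1 h.2)]
      simp
  rw [setIntegral_congr_fun (by exact (measurableSet_Ioi.prod measurableSet_Ioo)) h2]
  rw [show polarCoord.target = Set.Ioi (0:ℝ) ×ˢ Set.Ioo (-Real.pi) Real.pi from rfl]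
  rw [Measure.volume_eq_prod, ← Measure.prod_restrict, integral_prod_mul G H]
  have hGint : ∫ r in Set.Ioi (0:ℝ), G r =
      ((∫ r in (0:ℝ)..1, r ^ (m+n+1) * (1 - r^2) ^ p : ℝ) : ℂ) := by
    rw [hG, setIntegral_indicator measurableSet_Ioo,
      show Set.Ioi (0:ℝ) ∩ Set.Ioo 0 1 = Set.Ioo 0 1 by
        rw [Set.inter_eq_right]; exact fun x hx => hx.1]
    rw [intervalIntegral.integral_of_le zero_le_one, MeasureTheory.integral_Ioc_eq_integral_Ioo]
    simp_rw [← Complex.ofReal_pow, ← Complex.ofReal_mul]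
    rw [show ((∫ t in Set.Ioo (0:ℝ) 1, t ^ (m+n+1) * (1 - t^2) ^ p : ℝ) : ℂ)
      = ∫ t in Set.Ioo (0:ℝ) 1, ((t ^ (m+n+1) * (1 - t^2) ^ p : ℝ) : ℂ) from
      (integral_ofReal (𝕜 := ℂ)).symm]
  have hHint : ∫ θ in Set.Ioo (-Real.pi) Real.pi, H θ =
      if ((m:ℤ) - n = 0) then (2 * Real.pi : ℂ) else 0 := angular _
  rw [hGint, hHint]
  by_cases hmn : m = n
  · subst hmn
    rw [if_pos rfl, if_pos (sub_self _), show m + m + 1 = 2 * m + 1 by ring, radial_r m p]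
    have hfac : ((m + p + 1).factorial : ℝ) ≠ 0 := by exact_mod_cast (m+p+1).factorial_ne_zero
    push_cast
    field_simp
  · have hd : ((m:ℤ) - n) ≠ 0 := sub_ne_zero.mpr (by exact_mod_cast hmn)
    rw [if_neg hd, if_neg hmn, mul_zero]

lemma integrableOn_disk {f : ℂ → ℂ} (hf : Continuous f) : IntegrableOn f unitDisk := by
  have hsub : unitDisk ⊆ Metric.closedBall 0 1 := fun z hz => by
    simpa [Metric.mem_closedBall, Complex.dist_eq] using le_of_lt hz
  exact ((hf.locallyIntegrable).integrableOn_isCompact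
    (isCompact_closedBall 0 1)).mono_set hsub

lemma poch_fact (ν m : ℕ) (h : 1 ≤ ν) :
    ((ν - 1).factorial : ℝ) * poch (ν : ℝ) m = ((ν - 1 + m).factorial : ℝ) := by
  induction m with
  | zero => simp [poch]
  | succ m ih =>
    rw [poch, Finset.prod_range_succ, ← poch, ← mul_assoc, ih]
    rw [show ν - 1 + (m + 1) = (ν - 1 + m) + 1 by omega, Nat.factorial_succ]
    push_cast [show ν - 1 + m + 1 = ν + m by omega]
    ring

/-- For an integer `ν ≥ 2`, `k ∈ ℕ` and `v ∈ 𝔻`,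
`(ν−1)·∫_𝔻 |v−w|^{2k}(1−|w|²)^ν dι(w) = ∑_{i=0}^{k} C(k,i)²·(i!/(ν)_i)·|v|^{2(k−i)}`. -/
theorem moment_integral_eval (ν : ℕ) (hν : 2 ≤ ν) (k : ℕ) (v : ℂ) (hv : v ∈ unitDisk) :
    ((ν : ℝ) - 1) *
        ∫ w, ‖v - w‖ ^ (2 * k) * (1 - ‖w‖ ^ 2) ^ ν ∂iota =
      ∑ i ∈ Finset.range (k + 1),
        (k.choose i : ℝ) ^ 2 * ((Nat.factorial i : ℝ) / poch (ν : ℝ) i) *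
          ‖v‖ ^ (2 * (k - i)) := by
  have hπ : (0:ℝ) < Real.pi := Real.pi_pos
  set q := ν - 2 with hqdef
  have hq : ν = q + 2 := by omega
  -- Step A : reduce the iota-integral to a set integral over the disk
  have hA : (∫ w, ‖v - w‖ ^ (2 * k) * (1 - ‖w‖ ^ 2) ^ ν ∂iota)
      = (1/Real.pi) * ∫ w in unitDisk,
          ‖v - w‖ ^ (2 * k) * (1 - ‖w‖ ^ 2) ^ q := by
    have hmeas : Measurable (fun z : ℂ => (1 / (Real.pi * (1 - ‖z‖ ^ 2) ^ 2)).toNNReal) := by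
      apply Measurable.real_toNNReal
      apply Measurable.div measurable_const
      exact (continuous_const.mul
        ((continuous_const.sub (continuous_norm.pow 2)).pow 2)).measurable
    have hid : iota = (volume.restrict unitDisk).withDensity
        (fun z => (((1 / (Real.pi * (1 - ‖z‖ ^ 2) ^ 2)).toNNReal : NNReal) : ENNReal)) := rfl
    rw [hid, integral_withDensity_eq_integral_smul hmeas]
    rw [← integral_const_mul]
    apply setIntegral_congr_fun isOpen_unitDisk.measurableSet
    intro w hw
    dsimp only
    have hw1 : ‖w‖ < 1 := hw
    have hc : (0:ℝ) < 1 - ‖w‖ ^ 2 := by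
      have : ‖w‖ ^ 2 < 1 := by
        nlinarith [norm_nonneg w]
      linarith
    have hgpos : (0:ℝ) ≤ 1 / (Real.pi * (1 - ‖w‖ ^ 2) ^ 2) := by positivity
    rw [NNReal.smul_def, Real.coe_toNNReal _ hgpos]
    rw [hq, pow_add]
    have hcne : (1 - ‖w‖ ^ 2) ≠ 0 := ne_of_gt hc
    have hπne : Real.pi ≠ 0 := ne_of_gt hπ
    rw [smul_eq_mul]
    field_simp
  rw [hA]
  -- Step B : evaluate the disk integral
  set cc : ℂ → ℂ := fun w => ((1 - ‖w‖ ^ 2 : ℝ) : ℂ) ^ q with hcc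
  set C : ℕ → ℕ → ℂ := fun m n =>
    ((-1) ^ (m + k) * v ^ m * (k.choose m : ℂ)) *
      ((-1) ^ (n + k) * (starRingEnd ℂ v) ^ n * (k.choose n : ℂ)) with hC
  have hE : ∀ w : ℂ, ((‖v - w‖ ^ (2 * k) * (1 - ‖w‖ ^ 2) ^ q : ℝ) : ℂ)
      = ∑ m ∈ Finset.range (k+1), ∑ n ∈ Finset.range (k+1),
          C m n * (w ^ (k - m) * (starRingEnd ℂ w) ^ (k - n) * cc w) := by
    intro w
    have h0 : ((‖v - w‖ ^ (2 * k) * (1 - ‖w‖ ^ 2) ^ q : ℝ) : ℂ)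
        = (v - w) ^ k * (starRingEnd ℂ (v - w)) ^ k * cc w := by
      rw [← mul_pow, Complex.mul_conj, Complex.normSq_eq_norm_sq, hcc]
      push_cast
      ring
    rw [h0, map_sub, sub_pow, sub_pow, Finset.sum_mul_sum, Finset.sum_mul]
    refine Finset.sum_congr rfl fun m hm => ?_
    rw [Finset.sum_mul]
    refine Finset.sum_congr rfl fun n hn => ?_
    rw [hC]
    ring
  have hcont : ∀ m n : ℕ, Continuous
      (fun w : ℂ => w ^ (k - m) * (starRingEnd ℂ w) ^ (k - n) * cc w) := by
    intro m n
    have h1 : Continuous fun w : ℂ => w ^ (k - m) := continuous_pow _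
    have h2 : Continuous fun w : ℂ => (starRingEnd ℂ w) ^ (k - n) :=
      Complex.continuous_conj.pow _
    have h3 : Continuous cc := by
      rw [hcc]
      exact (Complex.continuous_ofReal.comp
        (continuous_const.sub (continuous_norm.pow 2))).pow q
    exact (h1.mul h2).mul h3
  have hintg : ∀ m n : ℕ, IntegrableOn
      (fun w : ℂ => C m n * (w ^ (k - m) * (starRingEnd ℂ w) ^ (k - n) * cc w)) unitDisk :=
    fun m n => integrableOn_disk (continuous_const.mul (hcont m n))
  set R : ℝ := ∫ w in unitDisk,
    ‖v - w‖ ^ (2 * k) * (1 - ‖w‖ ^ 2) ^ q with hR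
  have hRC : (R : ℂ) = ∑ m ∈ Finset.range (k+1),
      C m m * ((Real.pi : ℂ) * (k - m).factorial * q.factorial / ((k - m) + q + 1).factorial) := by
    have s1 : (R : ℂ) = ∫ w in unitDisk,
        ((‖v - w‖ ^ (2 * k) * (1 - ‖w‖ ^ 2) ^ q : ℝ) : ℂ) :=
      (integral_ofReal (𝕜 := ℂ)).symm
    rw [s1]
    simp_rw [hE]
    rw [integral_finset_sum _ (fun m _ => integrable_finset_sum _ (fun n _ => hintg m n))]
    refine Finset.sum_congr rfl fun m hm => ?_
    rw [integral_finset_sum _ (fun n _ => hintg m n)]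
    have hms : m ∈ Finset.range (k+1) := hm
    rw [Finset.sum_eq_single_of_mem m hms]
    · rw [integral_const_mul, disk_moment, if_pos rfl]
    · intro n hn hne
      have hd : k - m ≠ k - n := by
        have hm' : m < k + 1 := Finset.mem_range.mp hms
        have hn' : n < k + 1 := Finset.mem_range.mp hn
        omega
      rw [integral_const_mul, disk_moment, if_neg hd, mul_zero]
  have hCdiag : ∀ m : ℕ, C m m = ((‖v‖ ^ (2 * m) : ℝ) : ℂ) * (k.choose m : ℂ)^2 := by
    intro m
    rw [hC]
    have : ((-1 : ℂ) ^ (m + k)) * ((-1 : ℂ) ^ (m + k)) = 1 := by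
      rw [← pow_add, ← two_mul, pow_mul]
      norm_num
    calc ((-1:ℂ) ^ (m + k) * v ^ m * (k.choose m : ℂ)) *
          ((-1:ℂ) ^ (m + k) * (starRingEnd ℂ v) ^ m * (k.choose m : ℂ))
        = (((-1:ℂ) ^ (m + k)) * ((-1:ℂ) ^ (m + k))) * ((v * starRingEnd ℂ v) ^ m)
            * (k.choose m : ℂ)^2 := by ring
      _ = ((‖v‖ ^ (2 * m) : ℝ) : ℂ) * (k.choose m : ℂ)^2 := by
          rw [this, one_mul, Complex.mul_conj, Complex.normSq_eq_norm_sq]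
          push_cast
          ring
  have hRval : R = ∑ m ∈ Finset.range (k+1),
      ‖v‖ ^ (2 * m) * (k.choose m : ℝ)^2 *
        (Real.pi * (k - m).factorial * q.factorial / ((k - m) + q + 1).factorial) := by
    apply Complex.ofReal_injective
    rw [hRC]
    push_cast
    refine Finset.sum_congr rfl fun m hm => ?_
    rw [hCdiag m]
    push_cast
    ring
  rw [hRval]
  rw [← Finset.sum_range_reflect
    (fun i => (k.choose i : ℝ) ^ 2 * ((Nat.factorial i : ℝ) / poch (ν : ℝ) i) *
      ‖v‖ ^ (2 * (k - i))) (k+1)]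
  rw [Finset.mul_sum, Finset.mul_sum]
  refine Finset.sum_congr rfl fun m hm => ?_
  have hmk : m ≤ k := by have := Finset.mem_range.mp hm; omega
  have hre : k + 1 - 1 - m = k - m := by omega
  rw [hre]
  have hch : k.choose (k - m) = k.choose m := Nat.choose_symm hmk
  have hkk : k - (k - m) = m := by omega
  rw [hch, hkk]
  have hν1 : ((ν - 1 : ℕ) : ℝ) = (ν : ℝ) - 1 := by
    rw [Nat.cast_sub (by omega : 1 ≤ ν)]; norm_num
  have hfac1 : ((ν - 1).factorial : ℝ) = ((ν : ℝ) - 1) * q.factorial := by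
    rw [show ν - 1 = q + 1 by omega, Nat.factorial_succ]
    push_cast
    have h2 : ((q : ℝ) + 1) = (ν : ℝ) - 1 := by
      have h3 : (ν : ℝ) = (q : ℝ) + 2 := by exact_mod_cast congrArg (Nat.cast (R := ℝ)) hq
      linarith
    rw [h2]
  have hidx : (k - m) + q + 1 = ν - 1 + (k - m) := by omega
  have key : ((ν : ℝ) - 1) * q.factorial * poch (ν : ℝ) (k - m)
      = (((k - m) + q + 1).factorial : ℝ) := by
    rw [hidx, ← poch_fact ν (k - m) (by omega : 1 ≤ ν), hfac1]
  have hpochpos : 0 < poch (ν : ℝ) (k - m) := by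
    apply Finset.prod_pos
    intro i _
    have h4 : (0:ℝ) < ν := by exact_mod_cast (by omega : 0 < ν)
    positivity
  have hfacne : ((((k - m) + q + 1).factorial : ℝ)) ≠ 0 := by
    exact_mod_cast Nat.factorial_ne_zero _
  have hpochne : poch (ν : ℝ) (k - m) ≠ 0 := ne_of_gt hpochpos
  have hπne : Real.pi ≠ 0 := ne_of_gt hπ
  field_simp
  linear_combination (‖v‖ ^ (2*m) * (k.choose m : ℝ)^2) * key
end
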